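/- Let ρ₁ and ρ₂ be probability measures on ℝ with the same finite first moment and finite second moments, with characteristic functions ρ̂₁, ρ̂₂, and let d₁(ρ₁,ρ₂) = sup_{ξ≠0} |ξ|^{-1}|ρ̂₁(ξ) − ρ̂₂(ξ)| (which is finite). Then for every ξ ≠ 0, |ξ|^{-1} | ∫_0^1 ( ρ̂₁(σξ) ρ̂₁((1−σ)ξ) − ρ̂₂(σξ) ρ̂₂((1−σ)ξ) ) dσ | ≤ d₁(ρ₁, ρ₂). (Contraction estimate for the quadratic interaction term in Fourier variables.) -/

import Mathlib

open MeasureTheory Real Complex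

/-- The characteristic function `ρ̂(ξ) = ∫ e^{iξx} dρ(x)` of a measure on `ℝ`. -/
noncomputable def charFn (ρ : Measure ℝ) (ξ : ℝ) : ℂ :=
  ∫ x : ℝ, Complex.exp (Complex.I * (ξ : ℂ) * (x : ℂ)) ∂ρ

/-- The Fourier (Toscani) distance of order 1,
`d₁(ρ₁,ρ₂) = sup_{ξ≠0} |ξ|⁻¹ |ρ̂₁(ξ) − ρ̂₂(ξ)|`. -/
noncomputable def fourierDist1 (ρ₁ ρ₂ : Measure ℝ) : ℝ :=
  sSup {y : ℝ | ∃ ξ : ℝ, ξ ≠ 0 ∧ y = |ξ|⁻¹ * ‖charFn ρ₁ ξ - charFn ρ₂ ξ‖}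

lemma exp_I_sub_one_le (θ : ℝ) : ‖Complex.exp (Complex.I * θ) - 1‖ ≤ |θ| := by
  have h1 : Complex.I * (θ : ℂ) = (θ : ℂ) * Complex.I := by ring
  have h2 : ‖Complex.exp ((θ : ℂ) * Complex.I) - 1‖ ^ 2 = 2 - 2 * Real.cos θ := by
    rw [Complex.exp_mul_I, Complex.sq_norm]
    simp [Complex.normSq_apply, Complex.cos_ofReal_re, Complex.sin_ofReal_re]
    nlinarith [Real.sin_sq_add_cos_sq θ]
  have h3 : 2 - 2 * Real.cos θ ≤ θ ^ 2 := by
    have hc := Real.cos_sq (θ / 2)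
    have h2θ : 2 * (θ / 2) = θ := by ring
    rw [h2θ] at hc
    have hs := Real.sin_sq_add_cos_sq (θ / 2)
    have hle := Real.sin_sq_le_sq (x := θ / 2)
    nlinarith
  rw [h1]
  nlinarith [norm_nonneg (Complex.exp ((θ : ℂ) * Complex.I) - 1), abs_nonneg θ, _root_.sq_abs θ]

lemma norm_exp_I_eq_one (θ : ℝ) : ‖Complex.exp (Complex.I * θ)‖ = 1 := by
  have h1 : Complex.I * (θ : ℂ) = (θ : ℂ) * Complex.I := by ring
  rw [h1, Complex.norm_exp_ofReal_mul_I]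

lemma integrable_exp_char (ρ : Measure ℝ) [IsProbabilityMeasure ρ] (ξ : ℝ) :
    Integrable (fun x : ℝ => Complex.exp (Complex.I * (ξ : ℂ) * (x : ℂ))) ρ := by
  refine ⟨(Continuous.aestronglyMeasurable (by fun_prop)), ?_⟩
  refine (hasFiniteIntegral_const (1 : ℝ)).mono' (ae_of_all _ fun x => ?_)
  have : Complex.I * (ξ : ℂ) * (x : ℂ) = Complex.I * ((ξ * x : ℝ) : ℂ) := by push_cast; ring
  rw [this, norm_exp_I_eq_one]

lemma norm_charFn_le (ρ : Measure ℝ) [IsProbabilityMeasure ρ] (ξ : ℝ) :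
    ‖charFn ρ ξ‖ ≤ 1 := by
  refine (norm_integral_le_integral_norm _).trans ?_
  have h : ∀ x : ℝ, ‖Complex.exp (Complex.I * (ξ : ℂ) * (x : ℂ))‖ = 1 := fun x => by
    have : Complex.I * (ξ : ℂ) * (x : ℂ) = Complex.I * ((ξ * x : ℝ) : ℂ) := by push_cast; ring
    rw [this, norm_exp_I_eq_one]
  simp [h]

lemma charFn_zero (ρ : Measure ℝ) [IsProbabilityMeasure ρ] : charFn ρ 0 = 1 := by
  simp [charFn]

lemma charFn_eq (ρ : Measure ℝ) [IsProbabilityMeasure ρ]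
    (h : Integrable (fun x : ℝ => x) ρ) (ξ : ℝ) :
    charFn ρ ξ = (∫ x : ℝ, (Complex.exp (Complex.I * (ξ : ℂ) * (x : ℂ)) - 1
        - Complex.I * (ξ : ℂ) * (x : ℂ)) ∂ρ) + 1 + Complex.I * ξ * (∫ x : ℝ, x ∂ρ : ℝ) := by
  have hexp := integrable_exp_char ρ ξ
  have hx : Integrable (fun x : ℝ => Complex.I * (ξ : ℂ) * (x : ℂ)) ρ :=
    (h.ofReal).const_mul (Complex.I * ξ)
  have hA : Integrable (fun x : ℝ => Complex.exp (Complex.I * (ξ : ℂ) * (x : ℂ)) - 1) ρ :=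
    hexp.sub (integrable_const 1)
  have e1 : (∫ x : ℝ, (Complex.exp (Complex.I * (ξ : ℂ) * (x : ℂ)) - 1
        - Complex.I * (ξ : ℂ) * (x : ℂ)) ∂ρ)
      = (∫ x : ℝ, (Complex.exp (Complex.I * (ξ : ℂ) * (x : ℂ)) - 1) ∂ρ)
        - ∫ x : ℝ, Complex.I * (ξ : ℂ) * (x : ℂ) ∂ρ := integral_sub hA hx
  have e2 : (∫ x : ℝ, (Complex.exp (Complex.I * (ξ : ℂ) * (x : ℂ)) - 1) ∂ρ)
      = charFn ρ ξ - 1 := by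
    rw [integral_sub hexp (integrable_const 1)]; simp [charFn]
  have e3 : (∫ x : ℝ, Complex.I * (ξ : ℂ) * (x : ℂ) ∂ρ)
      = Complex.I * ξ * (∫ x : ℝ, x ∂ρ : ℝ) := by
    rw [integral_const_mul]; congr 1; exact integral_ofReal
  rw [e1, e2, e3]; ring

lemma remainder_bound (ρ : Measure ℝ) [IsProbabilityMeasure ρ]
    (h : Integrable (fun x : ℝ => x) ρ) (ξ : ℝ) :
    ‖∫ x : ℝ, (Complex.exp (Complex.I * (ξ : ℂ) * (x : ℂ)) - 1
      - Complex.I * (ξ : ℂ) * (x : ℂ)) ∂ρ‖ ≤ 2 * |ξ| * ∫ x : ℝ, |x| ∂ρ := by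
  refine (norm_integral_le_integral_norm _).trans ?_
  have hint : Integrable (fun x : ℝ => ‖Complex.exp (Complex.I * (ξ : ℂ) * (x : ℂ)) - 1
      - Complex.I * (ξ : ℂ) * (x : ℂ)‖) ρ :=
    (((integrable_exp_char ρ ξ).sub (integrable_const 1)).sub
      ((h.ofReal).const_mul (Complex.I * ξ))).norm
  have hint2 : Integrable (fun x : ℝ => 2 * |ξ| * |x|) ρ := (h.norm.const_mul _)
  have hle : ∀ x : ℝ, ‖Complex.exp (Complex.I * (ξ : ℂ) * (x : ℂ)) - 1
      - Complex.I * (ξ : ℂ) * (x : ℂ)‖ ≤ 2 * |ξ| * |x| := by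
    intro x
    have hc : Complex.I * (ξ : ℂ) * (x : ℂ) = Complex.I * ((ξ * x : ℝ) : ℂ) := by
      push_cast; ring
    calc ‖Complex.exp (Complex.I * (ξ : ℂ) * (x : ℂ)) - 1 - Complex.I * (ξ : ℂ) * (x : ℂ)‖
        ≤ ‖Complex.exp (Complex.I * (ξ : ℂ) * (x : ℂ)) - 1‖ + ‖Complex.I * (ξ : ℂ) * (x : ℂ)‖ :=
          norm_sub_le _ _
      _ ≤ |ξ * x| + |ξ * x| := by
          rw [hc]
          refine add_le_add (exp_I_sub_one_le (ξ * x)) (le_of_eq ?_)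
          simp [map_mul, abs_mul]
      _ = 2 * |ξ| * |x| := by rw [abs_mul]; ring
  calc (∫ x : ℝ, ‖Complex.exp (Complex.I * (ξ : ℂ) * (x : ℂ)) - 1
        - Complex.I * (ξ : ℂ) * (x : ℂ)‖ ∂ρ)
      ≤ ∫ x : ℝ, 2 * |ξ| * |x| ∂ρ := integral_mono hint hint2 hle
    _ = 2 * |ξ| * ∫ x : ℝ, |x| ∂ρ := integral_const_mul _ _

lemma charFn_diff_le (ρ₁ ρ₂ : Measure ℝ)
    [IsProbabilityMeasure ρ₁] [IsProbabilityMeasure ρ₂]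
    (h₁ : Integrable (fun x : ℝ => x) ρ₁) (h₂ : Integrable (fun x : ℝ => x) ρ₂)
    (hmean : (∫ x : ℝ, x ∂ρ₁) = ∫ x : ℝ, x ∂ρ₂) (ξ : ℝ) :
    ‖charFn ρ₁ ξ - charFn ρ₂ ξ‖ ≤ 2 * ((∫ x : ℝ, |x| ∂ρ₁) + ∫ x : ℝ, |x| ∂ρ₂) * |ξ| := by
  rw [charFn_eq ρ₁ h₁ ξ, charFn_eq ρ₂ h₂ ξ, hmean]
  have : (∫ x : ℝ, (Complex.exp (Complex.I * (ξ : ℂ) * (x : ℂ)) - 1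
        - Complex.I * (ξ : ℂ) * (x : ℂ)) ∂ρ₁) + 1 + Complex.I * ξ * (∫ x : ℝ, x ∂ρ₂ : ℝ)
      - ((∫ x : ℝ, (Complex.exp (Complex.I * (ξ : ℂ) * (x : ℂ)) - 1
        - Complex.I * (ξ : ℂ) * (x : ℂ)) ∂ρ₂) + 1 + Complex.I * ξ * (∫ x : ℝ, x ∂ρ₂ : ℝ))
      = (∫ x : ℝ, (Complex.exp (Complex.I * (ξ : ℂ) * (x : ℂ)) - 1
        - Complex.I * (ξ : ℂ) * (x : ℂ)) ∂ρ₁)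
      - ∫ x : ℝ, (Complex.exp (Complex.I * (ξ : ℂ) * (x : ℂ)) - 1
        - Complex.I * (ξ : ℂ) * (x : ℂ)) ∂ρ₂ := by ring
  rw [this]
  refine (norm_sub_le _ _).trans ?_
  have b1 := remainder_bound ρ₁ h₁ ξ
  have b2 := remainder_bound ρ₂ h₂ ξ
  nlinarith [abs_nonneg ξ]

lemma fourierSet_bddAbove (ρ₁ ρ₂ : Measure ℝ)
    [IsProbabilityMeasure ρ₁] [IsProbabilityMeasure ρ₂]
    (h₁ : Integrable (fun x : ℝ => x) ρ₁) (h₂ : Integrable (fun x : ℝ => x) ρ₂)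
    (hmean : (∫ x : ℝ, x ∂ρ₁) = ∫ x : ℝ, x ∂ρ₂) :
    BddAbove {y : ℝ | ∃ ξ : ℝ, ξ ≠ 0 ∧ y = |ξ|⁻¹ * ‖charFn ρ₁ ξ - charFn ρ₂ ξ‖} := by
  refine ⟨2 * ((∫ x : ℝ, |x| ∂ρ₁) + ∫ x : ℝ, |x| ∂ρ₂), ?_⟩
  rintro y ⟨ξ, hξ, rfl⟩
  have hpos : (0 : ℝ) < |ξ| := abs_pos.2 hξ
  have hb := charFn_diff_le ρ₁ ρ₂ h₁ h₂ hmean ξ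
  rw [inv_mul_le_iff₀ hpos]
  linarith [hb]

lemma charFn_diff_le_dist (ρ₁ ρ₂ : Measure ℝ)
    [IsProbabilityMeasure ρ₁] [IsProbabilityMeasure ρ₂]
    (h₁ : Integrable (fun x : ℝ => x) ρ₁) (h₂ : Integrable (fun x : ℝ => x) ρ₂)
    (hmean : (∫ x : ℝ, x ∂ρ₁) = ∫ x : ℝ, x ∂ρ₂) (η : ℝ) :
    ‖charFn ρ₁ η - charFn ρ₂ η‖ ≤ fourierDist1 ρ₁ ρ₂ * |η| := by
  rcases eq_or_ne η 0 with rfl | hη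
  · simp [charFn_zero]
  · have hmem : |η|⁻¹ * ‖charFn ρ₁ η - charFn ρ₂ η‖ ∈
        {y : ℝ | ∃ ξ : ℝ, ξ ≠ 0 ∧ y = |ξ|⁻¹ * ‖charFn ρ₁ ξ - charFn ρ₂ ξ‖} := ⟨η, hη, rfl⟩
    have hle := le_csSup (fourierSet_bddAbove ρ₁ ρ₂ h₁ h₂ hmean) hmem
    have hpos : (0 : ℝ) < |η| := abs_pos.2 hη
    calc ‖charFn ρ₁ η - charFn ρ₂ η‖
        = |η| * (|η|⁻¹ * ‖charFn ρ₁ η - charFn ρ₂ η‖) := by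
          field_simp
      _ ≤ |η| * fourierDist1 ρ₁ ρ₂ := by
          exact mul_le_mul_of_nonneg_left hle hpos.le
      _ = fourierDist1 ρ₁ ρ₂ * |η| := by ring


/-- Contraction estimate for the quadratic interaction term in Fourier
variables: for probability measures with the same first moment and finite
second moments, for every `ξ ≠ 0`,
`|ξ|⁻¹ |∫₀¹ (ρ̂₁(σξ)ρ̂₁((1−σ)ξ) − ρ̂₂(σξ)ρ̂₂((1−σ)ξ)) dσ| ≤ d₁(ρ₁,ρ₂)`. -/
theorem interaction_term_contraction (ρ₁ ρ₂ : Measure ℝ)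
    [IsProbabilityMeasure ρ₁] [IsProbabilityMeasure ρ₂]
    (h₁ : Integrable (fun x : ℝ => x) ρ₁)
    (h₂ : Integrable (fun x : ℝ => x) ρ₂)
    (hmean : (∫ x : ℝ, x ∂ρ₁) = ∫ x : ℝ, x ∂ρ₂)
    (h₁' : Integrable (fun x : ℝ => x ^ 2) ρ₁)
    (h₂' : Integrable (fun x : ℝ => x ^ 2) ρ₂)
    (ξ : ℝ) (hξ : ξ ≠ 0) :
    |ξ|⁻¹ * ‖∫ σ in (0 : ℝ)..1,
        (charFn ρ₁ (σ * ξ) * charFn ρ₁ ((1 - σ) * ξ) -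
          charFn ρ₂ (σ * ξ) * charFn ρ₂ ((1 - σ) * ξ))‖ ≤
      fourierDist1 ρ₁ ρ₂ := by
  set d := fourierDist1 ρ₁ ρ₂ with hd
  have key := charFn_diff_le_dist ρ₁ ρ₂ h₁ h₂ hmean
  have hd0 : 0 ≤ d := by
    have := key ξ
    have h0 := norm_nonneg (charFn ρ₁ ξ - charFn ρ₂ ξ)
    nlinarith [abs_pos.2 hξ]
  have hbound : ∀ σ ∈ Set.uIoc (0 : ℝ) 1,
      ‖charFn ρ₁ (σ * ξ) * charFn ρ₁ ((1 - σ) * ξ) -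
        charFn ρ₂ (σ * ξ) * charFn ρ₂ ((1 - σ) * ξ)‖ ≤ d * |ξ| := by
    intro σ hσ
    rw [Set.uIoc_of_le (by norm_num : (0:ℝ) ≤ 1)] at hσ
    obtain ⟨hσ0, hσ1⟩ := hσ
    have hid : charFn ρ₁ (σ * ξ) * charFn ρ₁ ((1 - σ) * ξ) -
        charFn ρ₂ (σ * ξ) * charFn ρ₂ ((1 - σ) * ξ)
        = (charFn ρ₁ (σ * ξ) - charFn ρ₂ (σ * ξ)) * charFn ρ₁ ((1 - σ) * ξ)
          + charFn ρ₂ (σ * ξ) * (charFn ρ₁ ((1 - σ) * ξ) - charFn ρ₂ ((1 - σ) * ξ)) := by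
      ring
    rw [hid]
    calc ‖(charFn ρ₁ (σ * ξ) - charFn ρ₂ (σ * ξ)) * charFn ρ₁ ((1 - σ) * ξ)
          + charFn ρ₂ (σ * ξ) * (charFn ρ₁ ((1 - σ) * ξ) - charFn ρ₂ ((1 - σ) * ξ))‖
        ≤ ‖charFn ρ₁ (σ * ξ) - charFn ρ₂ (σ * ξ)‖ * ‖charFn ρ₁ ((1 - σ) * ξ)‖
          + ‖charFn ρ₂ (σ * ξ)‖ * ‖charFn ρ₁ ((1 - σ) * ξ) - charFn ρ₂ ((1 - σ) * ξ)‖ := by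
          refine (norm_add_le _ _).trans ?_
          rw [norm_mul, norm_mul]
      _ ≤ ‖charFn ρ₁ (σ * ξ) - charFn ρ₂ (σ * ξ)‖ * 1
          + 1 * ‖charFn ρ₁ ((1 - σ) * ξ) - charFn ρ₂ ((1 - σ) * ξ)‖ := by
          gcongr
          · exact norm_charFn_le ρ₁ _
          · exact norm_charFn_le ρ₂ _
      _ ≤ d * |σ * ξ| * 1 + 1 * (d * |(1 - σ) * ξ|) := by
          gcongr
          · exact key _
          · exact key _
      _ = d * |ξ| * (|σ| + |1 - σ|) := by rw [abs_mul, abs_mul]; ring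
      _ = d * |ξ| := by
          rw [abs_of_pos hσ0, _root_.abs_of_nonneg (by linarith : (0:ℝ) ≤ 1 - σ)]
          ring
  have hint := intervalIntegral.norm_integral_le_of_norm_le_const hbound
  simp only [sub_zero, abs_one, mul_one] at hint
  have hpos : (0 : ℝ) < |ξ| := abs_pos.2 hξ
  rw [inv_mul_le_iff₀ hpos]
  linarith [hint]
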